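/- Any nonnegative power vector p satisfying SINR_k(p) ≥ r_k for all k ∈ {1,…,K} satisfies p_k ≥ p^min_k componentwise, where p^min is the recursively defined minimal power vector; consequently p^min uniquely minimizes the total power ∑_k p_k subject to the SINR constraints. -/
import Mathlib


/-- Any nonnegative feasible power vector dominates the recursively defined minimal one
componentwise; consequently `p^min` uniquely minimizes the total power. -/
theorem stmt_5 {K : ℕ} (σ2 : ℝ) (hσ : 0 < σ2) (H : Fin K → Fin K → ℝ)
    (hH : ∀ j k, 0 < H j k) (r : Fin K → ℝ) (hr : ∀ k, 0 < r k)
    (pmin : Fin K → ℝ)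
    (hrec : ∀ k, pmin k = r k * ((∑ j ∈ Finset.Ioi k, pmin j * H j k) + σ2) / H k k)
    (p : Fin K → ℝ) (hp : ∀ k, 0 ≤ p k)
    (hfeas : ∀ k, r k ≤ p k * H k k / ((∑ j ∈ Finset.Ioi k, p j * H j k) + σ2)) :
    (∀ k, pmin k ≤ p k) ∧ ((∑ k, pmin k) ≤ ∑ k, p k) ∧
      ((∑ k, p k) = (∑ k, pmin k) → p = pmin) := by
  have key : ∀ n : ℕ, ∀ k : Fin K, K - k.val ≤ n → pmin k ≤ p k := by
    intro n
    induction n with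
    | zero => intro k hk; exact absurd k.isLt (by omega)
    | succ n ih =>
      intro k hk
      have hSpos : 0 < (∑ j ∈ Finset.Ioi k, p j * H j k) + σ2 := by
        have : 0 ≤ ∑ j ∈ Finset.Ioi k, p j * H j k :=
          Finset.sum_nonneg fun j _ => mul_nonneg (hp j) (hH j k).le
        linarith
      have hfeask := hfeas k
      have h1 : r k * ((∑ j ∈ Finset.Ioi k, p j * H j k) + σ2) ≤ p k * H k k :=
        (le_div_iff₀ hSpos).mp hfeask
      have h2 : ∑ j ∈ Finset.Ioi k, pmin j * H j k ≤ ∑ j ∈ Finset.Ioi k, p j * H j k := by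
        apply Finset.sum_le_sum
        intro j hj
        have hjk : k < j := Finset.mem_Ioi.mp hj
        have : pmin j ≤ p j := ih j (by omega)
        exact mul_le_mul_of_nonneg_right this (hH j k).le
      rw [hrec k, div_le_iff₀ (hH k k)]
      calc r k * ((∑ j ∈ Finset.Ioi k, pmin j * H j k) + σ2)
          ≤ r k * ((∑ j ∈ Finset.Ioi k, p j * H j k) + σ2) := by
            exact mul_le_mul_of_nonneg_left (by linarith) (hr k).le
        _ ≤ p k * H k k := h1
  have hle : ∀ k, pmin k ≤ p k := fun k => key (K - k.val) k le_rfl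
  refine ⟨hle, Finset.sum_le_sum fun k _ => hle k, ?_⟩
  intro hsum
  funext k
  exact ((Finset.sum_eq_sum_iff_of_le fun i _ => hle i).mp hsum.symm k (Finset.mem_univ k)).symm
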